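/- With the notation above, the map ν_𝕂 is antisymmetric: ν_𝕂(f,g) = -ν_𝕂(g,f) for all f, g ∈ 𝕂×. -/

import Mathlib

/-- An abstract (additive, surjective) discrete valuation on a field `K`:
`ν : K → ℤ` with `ν 0 = 0` by convention, multiplicative on nonzero elements,
satisfying the ultrametric inequality, and surjective onto `ℤ`. -/
structure DiscreteValuationOn (K : Type*) [Field K] where
  ν : K → ℤ
  ν_zero : ν 0 = 0
  ν_mul : ∀ {x y : K}, x ≠ 0 → y ≠ 0 → ν (x * y) = ν x + ν y
  ν_add : ∀ {x y : K}, x ≠ 0 → y ≠ 0 → x + y ≠ 0 → min (ν x) (ν y) ≤ ν (x + y)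
  surj : ∀ n : ℤ, ∃ x : K, x ≠ 0 ∧ ν x = n

namespace DiscreteValuationOn

variable {K : Type*} [Field K] (v : DiscreteValuationOn K)

lemma ν_one : v.ν 1 = 0 := by
  have h := v.ν_mul (x := (1 : K)) one_ne_zero one_ne_zero
  rw [mul_one] at h
  omega

lemma ν_neg_one : v.ν (-1 : K) = 0 := by
  have h := v.ν_mul (x := (-1 : K)) (y := (-1 : K))
    (neg_ne_zero.mpr one_ne_zero) (neg_ne_zero.mpr one_ne_zero)
  rw [neg_mul_neg, one_mul, v.ν_one] at h
  omega

lemma ν_neg (x : K) : v.ν (-x) = v.ν x := by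
  rcases eq_or_ne x 0 with rfl | hx
  · rw [neg_zero]
  · have h := v.ν_mul (x := (-1 : K)) (y := x) (neg_ne_zero.mpr one_ne_zero) hx
    rw [neg_one_mul] at h
    rw [h, v.ν_neg_one, zero_add]

/-- The valuation ring of `v`. -/
def O : Subring K where
  carrier := {x : K | x = 0 ∨ 0 ≤ v.ν x}
  zero_mem' := Or.inl rfl
  one_mem' := Or.inr (le_of_eq v.ν_one.symm)
  mul_mem' := by
    intro x y hx hy
    rcases eq_or_ne x 0 with rfl | hx0
    · exact Or.inl (zero_mul _)
    rcases eq_or_ne y 0 with rfl | hy0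
    · exact Or.inl (mul_zero _)
    rcases hx with rfl | hx
    · exact absurd rfl hx0
    rcases hy with rfl | hy
    · exact absurd rfl hy0
    refine Or.inr ?_
    rw [v.ν_mul hx0 hy0]
    omega
  add_mem' := by
    intro x y hx hy
    rcases eq_or_ne x 0 with rfl | hx0
    · simpa using hy
    rcases eq_or_ne y 0 with rfl | hy0
    · simpa using hx
    rcases eq_or_ne (x + y) 0 with h0 | h0
    · exact Or.inl h0
    rcases hx with rfl | hx
    · exact absurd rfl hx0
    rcases hy with rfl | hy
    · exact absurd rfl hy0
    have := v.ν_add hx0 hy0 h0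
    refine Or.inr ?_
    omega
  neg_mem' := by
    intro x hx
    rcases hx with rfl | hx
    · exact Or.inl neg_zero
    · exact Or.inr (by rw [v.ν_neg]; exact hx)

lemma mem_O_iff {x : K} : x ∈ v.O ↔ x = 0 ∨ 0 ≤ v.ν x := Iff.rfl

/-- The maximal ideal of the valuation ring. -/
def m : Ideal v.O where
  carrier := {x : v.O | (x : K) = 0 ∨ 0 < v.ν (x : K)}
  zero_mem' := Or.inl rfl
  add_mem' := by
    intro a b ha hb
    have hco : ((a + b : v.O) : K) = (a : K) + (b : K) := rfl
    simp only [Set.mem_setOf_eq, hco] at *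
    rcases eq_or_ne ((a : K)) 0 with h0a | h0a
    · rw [h0a, zero_add]; exact hb
    rcases eq_or_ne ((b : K)) 0 with h0b | h0b
    · rw [h0b, add_zero]; exact ha
    rcases eq_or_ne ((a : K) + (b : K)) 0 with h0 | h0
    · exact Or.inl h0
    rcases ha with h | ha
    · exact absurd h h0a
    rcases hb with h | hb
    · exact absurd h h0b
    have := v.ν_add h0a h0b h0
    exact Or.inr (by omega)
  smul_mem' := by
    intro c x hx
    have hco : ((c • x : v.O) : K) = (c : K) * (x : K) := rfl
    simp only [Set.mem_setOf_eq, hco] at *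
    rcases eq_or_ne ((c : K)) 0 with h0c | h0c
    · exact Or.inl (by rw [h0c, zero_mul])
    rcases eq_or_ne ((x : K)) 0 with h0x | h0x
    · exact Or.inl (by rw [h0x, mul_zero])
    rcases hx with h | hx
    · exact absurd h h0x
    rcases (v.mem_O_iff.mp c.2) with h | hc
    · exact absurd h h0c
    rw [v.ν_mul h0c h0x]
    exact Or.inr (by omega)

/-- Residue map `K → O/m`, sending elements outside `O` to `0`. -/
noncomputable def res (x : K) : v.O ⧸ v.m := by
  classical exact if h : x ∈ v.O then Ideal.Quotient.mk v.m ⟨x, h⟩ else 0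

/-- The one-dimensional tame symbol
`{f,g} = residue of (-1)^(ν f · ν g) · f^(ν g) · g^(-ν f)`. -/
noncomputable def tame (f g : K) : v.O ⧸ v.m :=
  v.res ((-1 : K) ^ (v.ν f * v.ν g) * f ^ (v.ν g) * g ^ (-(v.ν f)))

end DiscreteValuationOn

section TwoDimensional

variable {𝕂 K : Type*} [Field 𝕂] [Field K]

/-- The residue map `𝕂 → K` induced by a ring hom `ρ : O_𝕂 → K` on the valuation
ring (junk value `0` outside `O_𝕂`). -/
noncomputable def DiscreteValuationOn.resVia (v₁ : DiscreteValuationOn 𝕂)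
    (ρ : v₁.O →+* K) (x : 𝕂) : K := by
  classical exact if h : x ∈ v₁.O then ρ ⟨x, h⟩ else 0

/-- `ν_𝕂(f,g) := ν₂( residue of f^(ν₁ g) · g^(-ν₁ f) )`. -/
noncomputable def nuK (v₁ : DiscreteValuationOn 𝕂) (ρ : v₁.O →+* K)
    (v₂ : DiscreteValuationOn K) (f g : 𝕂) : ℤ :=
  v₂.ν (v₁.resVia ρ (f ^ (v₁.ν g) * g ^ (-(v₁.ν f))))

end TwoDimensional

namespace DiscreteValuationOn

variable {K : Type*} [Field K] (v : DiscreteValuationOn K)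

lemma ν_inv' {x : K} (hx : x ≠ 0) : v.ν x⁻¹ = -v.ν x := by
  have h := v.ν_mul hx (inv_ne_zero hx)
  rw [mul_inv_cancel₀ hx, v.ν_one] at h
  omega

lemma ν_pow' {x : K} (hx : x ≠ 0) (n : ℕ) : v.ν (x ^ n) = n * v.ν x := by
  induction n with
  | zero => simpa using v.ν_one
  | succ n ih =>
    rw [pow_succ, v.ν_mul (pow_ne_zero n hx) hx, ih]
    push_cast; ring

lemma ν_zpow' {x : K} (hx : x ≠ 0) (n : ℤ) : v.ν (x ^ n) = n * v.ν x := by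
  cases n with
  | ofNat m => simpa using v.ν_pow' hx m
  | negSucc m =>
    rw [zpow_negSucc, v.ν_inv' (pow_ne_zero _ hx), v.ν_pow' hx, Int.negSucc_eq]
    push_cast; ring

end DiscreteValuationOn

/-- the map `ν_𝕂` is antisymmetric: `ν_𝕂(f,g) = -ν_𝕂(g,f)`. -/
theorem nuK_antisymmetric {𝕂 K : Type*} [Field 𝕂] [Field K]
    (v₁ : DiscreteValuationOn 𝕂) (ρ : v₁.O →+* K)
    (hρ : Function.Surjective ρ) (hker : RingHom.ker ρ = v₁.m)
    (v₂ : DiscreteValuationOn K)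
    (f g : 𝕂) (hf : f ≠ 0) (hg : g ≠ 0) :
    nuK v₁ ρ v₂ f g = -(nuK v₁ ρ v₂ g f) := by
  classical
  set a := v₁.ν g with ha
  set b := v₁.ν f with hb
  set x : 𝕂 := f ^ a * g ^ (-b) with hxdef
  set y : 𝕂 := g ^ b * f ^ (-a) with hydef
  have hxne : x ≠ 0 := mul_ne_zero (zpow_ne_zero _ hf) (zpow_ne_zero _ hg)
  have hyne : y ≠ 0 := mul_ne_zero (zpow_ne_zero _ hg) (zpow_ne_zero _ hf)
  have hνx : v₁.ν x = 0 := by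
    rw [hxdef, v₁.ν_mul (zpow_ne_zero _ hf) (zpow_ne_zero _ hg),
      v₁.ν_zpow' hf, v₁.ν_zpow' hg]
    ring
  have hνy : v₁.ν y = 0 := by
    rw [hydef, v₁.ν_mul (zpow_ne_zero _ hg) (zpow_ne_zero _ hf),
      v₁.ν_zpow' hg, v₁.ν_zpow' hf]
    ring
  have hxO : x ∈ v₁.O := Or.inr hνx.ge
  have hyO : y ∈ v₁.O := Or.inr hνy.ge
  have hxy : x * y = 1 := by
    rw [hxdef, hydef]
    field_simp [zpow_neg]
    rw [zpow_neg, zpow_neg]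
    field_simp
  have hres : v₁.resVia ρ x = ρ ⟨x, hxO⟩ := by
    simp [DiscreteValuationOn.resVia, hxO]
  have hres' : v₁.resVia ρ y = ρ ⟨y, hyO⟩ := by
    simp [DiscreteValuationOn.resVia, hyO]
  have hmul : ρ ⟨x, hxO⟩ * ρ ⟨y, hyO⟩ = 1 := by
    rw [← map_mul, ← map_one ρ]
    congr 1
    exact Subtype.ext hxy
  have hxρ : ρ ⟨x, hxO⟩ ≠ 0 := by
    intro h
    have : (⟨x, hxO⟩ : v₁.O) ∈ RingHom.ker ρ := h
    rw [hker] at this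
    rcases this with h0 | hpos
    · exact hxne h0
    · simp only at hpos; omega
  have hyρ : ρ ⟨y, hyO⟩ ≠ 0 := by
    intro h
    have : (⟨y, hyO⟩ : v₁.O) ∈ RingHom.ker ρ := h
    rw [hker] at this
    rcases this with h0 | hpos
    · exact hyne h0
    · simp only at hpos; omega
  have key : v₂.ν (ρ ⟨x, hxO⟩) + v₂.ν (ρ ⟨y, hyO⟩) = 0 := by
    rw [← v₂.ν_mul hxρ hyρ, hmul, v₂.ν_one]
  unfold nuK
  rw [← ha, ← hb, ← hxdef, ← hydef, hres, hres']
  omega
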